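/- For α ∈ (0,1) ∪ (1,∞), λ ∈ [0,1], and strictly positive probability vectors p, q, the minimizer over probability vectors r of the linearly scalarized α-divergence objective λ·Σ_i r_i^α q_i^{1-α} + (1−λ)·Σ_i r_i^α p_i^{1-α} (for α > 1; maximizer for α ∈ (0,1)) is the vector r with r_i proportional to (λ q_i^{1-α} + (1−λ) p_i^{1-α})^{1/(1-α)}. -/

import Mathlib

open Real

/-- Tangent line inequality for `x ^ a`, convex case `1 ≤ a`. -/
lemma tangent_le_rpow {x y a : ℝ} (hx : 0 ≤ x) (hy : 0 < y) (ha : 1 ≤ a) :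
    y ^ a + a * y ^ (a - 1) * (x - y) ≤ x ^ a := by
  have hs : (-1 : ℝ) ≤ x / y - 1 := by
    have : 0 ≤ x / y := div_nonneg hx hy.le
    linarith
  have h := one_add_mul_self_le_rpow_one_add hs ha
  have e1 : 1 + (x / y - 1) = x / y := by ring
  rw [e1, Real.div_rpow hx hy.le] at h
  have hyα : 0 < y ^ a := Real.rpow_pos_of_pos hy a
  rw [le_div_iff₀ hyα] at h
  have e2 : y ^ a = y ^ (a - 1) * y := by
    rw [← Real.rpow_add_one hy.ne' (a - 1), sub_add_cancel]
  have e3 : (1 + a * (x / y - 1)) * y ^ a = y ^ a + a * y ^ (a - 1) * (x - y) := by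
    rw [e2]; field_simp
  linarith [e3 ▸ h]

/-- Tangent line inequality for `x ^ a`, concave case `0 ≤ a ≤ 1`. -/
lemma tangent_ge_rpow {x y a : ℝ} (hx : 0 ≤ x) (hy : 0 < y) (ha0 : 0 ≤ a) (ha1 : a ≤ 1) :
    x ^ a ≤ y ^ a + a * y ^ (a - 1) * (x - y) := by
  have hs : (-1 : ℝ) ≤ x / y - 1 := by
    have : 0 ≤ x / y := div_nonneg hx hy.le
    linarith
  have h := rpow_one_add_le_one_add_mul_self hs ha0 ha1
  have e1 : 1 + (x / y - 1) = x / y := by ring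
  rw [e1, Real.div_rpow hx hy.le] at h
  have hyα : 0 < y ^ a := Real.rpow_pos_of_pos hy a
  rw [div_le_iff₀ hyα] at h
  have e2 : y ^ a = y ^ (a - 1) * y := by
    rw [← Real.rpow_add_one hy.ne' (a - 1), sub_add_cancel]
  have e3 : (1 + a * (x / y - 1)) * y ^ a = y ^ a + a * y ^ (a - 1) * (x - y) := by
    rw [e2]; field_simp
  linarith [e3 ▸ h]

/-- For `α ∈ (0,1) ∪ (1,∞)`, `λ ∈ [0,1]`, and strictly positive probability
vectors `p`, `q`, the optimizer over the probability simplex of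
`r ↦ λ ∑ i, r i ^ α * q i ^ (1-α) + (1-λ) ∑ i, r i ^ α * p i ^ (1-α)`
(minimizer for `α > 1`, maximizer for `α ∈ (0,1)`) is the vector with
`r i ∝ (λ * q i ^ (1-α) + (1-λ) * p i ^ (1-α)) ^ (1/(1-α))`. -/
theorem scalarized_alpha_barycenter (n : ℕ) (p q : Fin n → ℝ)
    (hp0 : ∀ i, 0 < p i) (hp1 : ∑ i, p i = 1)
    (hq0 : ∀ i, 0 < q i) (hq1 : ∑ i, q i = 1)
    (α : ℝ) (hα : 0 < α) (hα1 : α ≠ 1)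
    (l : ℝ) (hl0 : 0 ≤ l) (hl1 : l ≤ 1) :
    letI f : (Fin n → ℝ) → ℝ := fun r =>
      l * ∑ i, r i ^ α * q i ^ (1 - α) + (1 - l) * ∑ i, r i ^ α * p i ^ (1 - α)
    letI w : Fin n → ℝ := fun i =>
      (l * q i ^ (1 - α) + (1 - l) * p i ^ (1 - α)) ^ ((1 : ℝ) / (1 - α))
    letI r : Fin n → ℝ := fun i => w i / ∑ j, w j
    r ∈ stdSimplex ℝ (Fin n) ∧
      (1 < α → ∀ s ∈ stdSimplex ℝ (Fin n), f r ≤ f s) ∧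
      (α < 1 → ∀ s ∈ stdSimplex ℝ (Fin n), f s ≤ f r) := by
  let c : Fin n → ℝ := fun i => l * q i ^ (1 - α) + (1 - l) * p i ^ (1 - α)
  let w : Fin n → ℝ := fun i => c i ^ ((1 : ℝ) / (1 - α))
  let r : Fin n → ℝ := fun i => w i / ∑ j, w j
  let f : (Fin n → ℝ) → ℝ := fun s =>
    l * ∑ i, s i ^ α * q i ^ (1 - α) + (1 - l) * ∑ i, s i ^ α * p i ^ (1 - α)
  show r ∈ stdSimplex ℝ (Fin n) ∧
      (1 < α → ∀ s ∈ stdSimplex ℝ (Fin n), f r ≤ f s) ∧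
      (α < 1 → ∀ s ∈ stdSimplex ℝ (Fin n), f s ≤ f r)
  have hβ : (1 : ℝ) - α ≠ 0 := fun h => hα1 (by linarith)
  have hc : ∀ i, 0 < c i := by
    intro i
    have hq' := Real.rpow_pos_of_pos (hq0 i) (1 - α)
    have hp' := Real.rpow_pos_of_pos (hp0 i) (1 - α)
    rcases eq_or_lt_of_le hl0 with h | h
    · show 0 < l * q i ^ (1 - α) + (1 - l) * p i ^ (1 - α)
      rw [← h]; simpa using hp'
    · have h1 : 0 < l * q i ^ (1 - α) := mul_pos h hq'
      have h2 : 0 ≤ (1 - l) * p i ^ (1 - α) := mul_nonneg (by linarith) hp'.le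
      show 0 < l * q i ^ (1 - α) + (1 - l) * p i ^ (1 - α)
      linarith
  have hwc : ∀ i, w i = c i ^ ((1 : ℝ) / (1 - α)) := fun i => rfl
  have hw : ∀ i, 0 < w i := fun i => by
    rw [hwc i]; exact Real.rpow_pos_of_pos (hc i) _
  have hne : Nonempty (Fin n) := by
    rcases Nat.eq_zero_or_pos n with h | h
    · subst h; simp at hp1
    · exact ⟨⟨0, h⟩⟩
  have hW : 0 < ∑ j, w j := Finset.sum_pos (fun i _ => hw i) Finset.univ_nonempty
  have hr0 : ∀ i, 0 < r i := fun i => div_pos (hw i) hW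
  have hrsum : ∑ i, r i = 1 := by
    show ∑ i, w i / ∑ j, w j = 1
    rw [← Finset.sum_div, div_self hW.ne']
  have hrmem : r ∈ stdSimplex ℝ (Fin n) := ⟨fun i => (hr0 i).le, hrsum⟩
  have hf : ∀ s : Fin n → ℝ, f s = ∑ i, c i * s i ^ α := by
    intro s
    show l * (∑ i, s i ^ α * q i ^ (1 - α)) + (1 - l) * (∑ i, s i ^ α * p i ^ (1 - α)) = _
    rw [Finset.mul_sum, Finset.mul_sum, ← Finset.sum_add_distrib]
    exact Finset.sum_congr rfl fun i _ => by show _ = (l * q i ^ (1-α) + (1-l) * p i ^ (1-α)) * s i ^ α; ring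
  have hBc : ∀ i, c i * w i ^ (α - 1) = 1 := by
    intro i
    rw [hwc i, ← Real.rpow_mul (hc i).le]
    have : (1 : ℝ) / (1 - α) * (α - 1) = -1 := by field_simp; ring
    rw [this, Real.rpow_neg_one]
    exact mul_inv_cancel₀ (hc i).ne'
  have hB : ∀ i, c i * r i ^ (α - 1) = (∑ j, w j) ^ ((1 : ℝ) - α) := by
    intro i
    show c i * (w i / ∑ j, w j) ^ (α - 1) = _
    rw [Real.div_rpow (hw i).le hW.le, ← mul_div_assoc, hBc i,
      show (1 : ℝ) - α = -(α - 1) by ring, Real.rpow_neg hW.le, one_div]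
  have hrα : ∀ i, r i ^ α = r i ^ (α - 1) * r i := fun i => by
    rw [← Real.rpow_add_one (hr0 i).ne' (α - 1), sub_add_cancel]
  have hfr : f r = (∑ j, w j) ^ ((1 : ℝ) - α) := by
    rw [hf r]
    have : ∀ i ∈ Finset.univ, c i * r i ^ α = (∑ j, w j) ^ ((1 : ℝ) - α) * r i := by
      intro i _
      rw [hrα i, ← mul_assoc, hB i]
    rw [Finset.sum_congr rfl this, ← Finset.mul_sum, hrsum, mul_one]
  have hsum : ∀ s : Fin n → ℝ, ∑ i, s i = 1 →
      ∑ i, (c i * r i ^ α + α * (c i * r i ^ (α - 1)) * (s i - r i)) = f r := by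
    intro s hs
    rw [Finset.sum_add_distrib]
    have e1 : ∑ i, α * (c i * r i ^ (α - 1)) * (s i - r i)
        = α * (∑ j, w j) ^ ((1 : ℝ) - α) * (∑ i, (s i - r i)) := by
      rw [Finset.mul_sum]
      exact Finset.sum_congr rfl fun i _ => by rw [hB i]
    rw [e1, Finset.sum_sub_distrib, hs, hrsum, sub_self, mul_zero, add_zero, hf r]
  refine ⟨hrmem, ?_, ?_⟩
  · intro hα' s hs
    calc f r = ∑ i, (c i * r i ^ α + α * (c i * r i ^ (α - 1)) * (s i - r i)) :=
          (hsum s hs.2).symm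
      _ ≤ ∑ i, c i * s i ^ α := by
          refine Finset.sum_le_sum fun i _ => ?_
          have h := tangent_le_rpow (hs.1 i) (hr0 i) hα'.le
          have h2 := mul_le_mul_of_nonneg_left h (hc i).le
          have e : c i * (r i ^ α + α * r i ^ (α - 1) * (s i - r i))
              = c i * r i ^ α + α * (c i * r i ^ (α - 1)) * (s i - r i) := by ring
          rw [e] at h2
          exact h2
      _ = f s := (hf s).symm
  · intro hα' s hs
    calc f s = ∑ i, c i * s i ^ α := hf s
      _ ≤ ∑ i, (c i * r i ^ α + α * (c i * r i ^ (α - 1)) * (s i - r i)) := by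
          refine Finset.sum_le_sum fun i _ => ?_
          have h := tangent_ge_rpow (hs.1 i) (hr0 i) hα.le hα'.le
          have h2 := mul_le_mul_of_nonneg_left h (hc i).le
          have e : c i * (r i ^ α + α * r i ^ (α - 1) * (s i - r i))
              = c i * r i ^ α + α * (c i * r i ^ (α - 1)) * (s i - r i) := by ring
          rw [e] at h2
          exact h2
      _ = f r := hsum s hs.2
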